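/- Let A ∈ ℝ^{n×n} be the adjacency matrix of a finite simple graph, D = diag(A𝟙), μ ∈ [0,1], and let q_k be defined by q_0 = I, q_1 = A, q_2 = A² − μD, q_{k+1} = A·q_k + μ(μI − D)·q_{k−1} for k ≥ 2. Then for μ = 1 the matrices q_k coincide with the nonbacktracking walk count matrices: (q_k)_{ij} equals the number of nonbacktracking walks of length k from i to j, for all k ∈ ℕ and all vertices i, j. -/

import Mathlib

open Matrix

/-- The number of backtracking instances of a walk `w`, i.e. the number of indices
`ℓ` with `0 ≤ ℓ ≤ length − 2` such that the `ℓ`-th and `(ℓ+2)`-th vertices coincide. -/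
def btCount {n : ℕ} {G : SimpleGraph (Fin n)} {i j : Fin n} (w : G.Walk i j) : ℕ :=
  ((Finset.range (w.length - 1)).filter (fun ℓ => w.getVert ℓ = w.getVert (ℓ + 2))).card

set_option linter.unusedSectionVars false

section Aux
open Finset SimpleGraph
variable {n : ℕ} {G : SimpleGraph (Fin n)} [DecidableRel G.Adj]

lemma btCount_cons {i l j : Fin n} (h : G.Adj i l) (p : G.Walk l j) :
    btCount (Walk.cons h p) = btCount p + (if p.getVert 1 = i then 1 else 0) := by
  rcases Nat.eq_zero_or_pos p.length with h0 | hpos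
  · have hlj : l = j := p.eq_of_length_eq_zero h0
    have hnil : p.getVert 1 = j := p.getVert_of_length_le (by omega)
    have hne : p.getVert 1 ≠ i := by rw [hnil, ← hlj]; exact fun e => (G.ne_of_adj h) e.symm
    simp only [btCount, Walk.length_cons, h0, hne, if_neg]
    simp
  · have hlen : (Walk.cons h p).length - 1 = (p.length - 1) + 1 := by
      simp only [Walk.length_cons]; omega
    rw [btCount, hlen, Finset.card_filter, Finset.sum_range_succ', btCount, Finset.card_filter]
    congr 1
    · simp only [Walk.getVert_zero, Walk.getVert_cons_succ]
      by_cases hc : p.getVert 1 = i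
      · simp [hc]
      · simp [hc, Ne.symm hc]

lemma card_filter_cons_decomp (k : ℕ) (i j : Fin n) (P : G.Walk i j → Prop) [DecidablePred P] :
    ((G.finsetWalkLength (k+1) i j).filter P).card
      = ∑ w : G.neighborSet i, ((G.finsetWalkLength k w j).filter
          (fun p => P (Walk.cons w.property p))).card := by
  have hdef : G.finsetWalkLength (k+1) i j = Finset.univ.biUnion fun (w : G.neighborSet i) =>
      (G.finsetWalkLength k w j).map ⟨fun p => Walk.cons w.property p, fun _ _ h => by injection h⟩ := rfl
  rw [hdef, Finset.filter_biUnion, Finset.card_biUnion]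
  · apply Finset.sum_congr rfl
    intro w _
    rw [Finset.filter_map, Finset.card_map]
    rfl
  · rintro ⟨x, hx⟩ - ⟨y, hy⟩ - hxy
    refine Finset.disjoint_left.mpr ?_
    intro p hp hp'
    simp only [Finset.mem_filter, Finset.mem_map, Function.Embedding.coeFn_mk] at hp hp'
    obtain ⟨⟨q, _, rfl⟩, -⟩ := hp
    obtain ⟨⟨q', _, he⟩, -⟩ := hp'
    apply hxy
    have h1 : (Walk.cons hx q).getVert 1 = x := (Walk.getVert_cons_succ q hx).trans q.getVert_zero
    have h2 : (Walk.cons hy q').getVert 1 = y := (Walk.getVert_cons_succ q' hy).trans q'.getVert_zero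
    rw [show Walk.cons hy q' = Walk.cons hx q from he] at h2
    exact Subtype.ext (h1.symm.trans h2)

lemma btCount_cons_eq_zero_iff {i l j : Fin n} (h : G.Adj i l) (p : G.Walk l j) :
    btCount (Walk.cons h p) = 0 ↔ (btCount p = 0 ∧ p.getVert 1 ≠ i) := by
  rw [btCount_cons]
  by_cases hc : p.getVert 1 = i <;> simp [hc]

lemma btCount_eq_zero_of_length_le_one {i j : Fin n} (w : G.Walk i j) (h : w.length ≤ 1) :
    btCount w = 0 := by
  have : w.length - 1 = 0 := by omega
  simp [btCount, this]

def Scount (G : SimpleGraph (Fin n)) [DecidableRel G.Adj] (k : ℕ) (l j i : Fin n) : ℕ :=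
  ((G.finsetWalkLength k l j).filter (fun p => btCount p = 0 ∧ p.getVert 1 ≠ i)).card

def Tcount (G : SimpleGraph (Fin n)) [DecidableRel G.Adj] (k : ℕ) (l j i : Fin n) : ℕ :=
  ((G.finsetWalkLength k l j).filter (fun p => btCount p = 0 ∧ p.getVert 1 = i)).card

def Ncount (G : SimpleGraph (Fin n)) [DecidableRel G.Adj] (k : ℕ) (i j : Fin n) : ℕ :=
  ((G.finsetWalkLength k i j).filter (fun w => btCount w = 0)).card

lemma sum_nbhd_subtype (v : Fin n) (f : Fin n → ℕ) :
    ∑ w : G.neighborSet v, f w.1 = ∑ l ∈ G.neighborFinset v, f l :=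
  (Finset.sum_subtype (G.neighborFinset v) (fun x => by simp) f).symm

lemma lemA (k : ℕ) (i j : Fin n) :
    Ncount G (k+1) i j = ∑ l ∈ G.neighborFinset i, Scount G k l j i := by
  rw [Ncount, card_filter_cons_decomp, ← sum_nbhd_subtype]
  apply Finset.sum_congr rfl
  intro w _
  rw [Scount]
  congr 1
  apply Finset.filter_congr
  intro p _
  exact btCount_cons_eq_zero_iff _ _

lemma lemST (k : ℕ) (l j i : Fin n) :
    Tcount G k l j i + Scount G k l j i = Ncount G k l j := by
  rw [Tcount, Scount, Ncount]
  have := Finset.card_filter_add_card_filter_not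
    (s := (G.finsetWalkLength k l j).filter (fun w => btCount w = 0))
    (p := fun p => p.getVert 1 = i)
  rw [Finset.filter_filter, Finset.filter_filter] at this
  exact this

lemma lemT (m : ℕ) (u j v : Fin n) :
    Tcount G (m+1) u j v = if G.Adj u v then Scount G m v j u else 0 := by
  rw [Tcount, card_filter_cons_decomp]
  have hterm : ∀ w : G.neighborSet u,
      ((G.finsetWalkLength m w j).filter
        (fun p => btCount (Walk.cons w.property p) = 0
          ∧ (Walk.cons w.property p).getVert 1 = v)).card
      = if w.1 = v then Scount G m w.1 j u else 0 := by
    intro w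
    by_cases hv : w.1 = v
    · rw [if_pos hv, Scount]
      congr 1
      apply Finset.filter_congr
      intro p _
      rw [(Walk.getVert_cons_succ p w.property).trans p.getVert_zero, btCount_cons_eq_zero_iff w.property p]
      simp [hv]
    · rw [if_neg hv]
      rw [Finset.card_eq_zero, Finset.filter_eq_empty_iff]
      intro p _
      rw [(Walk.getVert_cons_succ p w.property).trans p.getVert_zero]
      tauto
  rw [Finset.sum_congr rfl (fun w _ => hterm w),
    sum_nbhd_subtype u (fun l => if l = v then Scount G m l j u else 0),
    Finset.sum_ite_eq' (G.neighborFinset u) v (fun l => Scount G m l j u)]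
  simp [SimpleGraph.mem_neighborFinset]

lemma keyRec (m : ℕ) (i j : Fin n) :
    Ncount G (m+3) i j + G.degree i * Ncount G (m+1) i j
      = (∑ l ∈ G.neighborFinset i, Ncount G (m+2) l j) + Ncount G (m+1) i j := by
  have A1 : Ncount G (m+3) i j = ∑ l ∈ G.neighborFinset i, Scount G (m+2) l j i := lemA _ i j
  have A2 : (∑ l ∈ G.neighborFinset i, Tcount G (m+2) l j i)
      + (∑ l ∈ G.neighborFinset i, Scount G (m+2) l j i)
      = ∑ l ∈ G.neighborFinset i, Ncount G (m+2) l j := by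
    rw [← Finset.sum_add_distrib]
    exact Finset.sum_congr rfl fun l _ => lemST _ _ _ _
  have A3 : (∑ l ∈ G.neighborFinset i, Tcount G (m+2) l j i)
      = ∑ l ∈ G.neighborFinset i, Scount G (m+1) i j l := by
    apply Finset.sum_congr rfl
    intro l hl
    rw [lemT, if_pos ((SimpleGraph.mem_neighborFinset G i l).mp hl).symm]
  have A4 : (∑ l ∈ G.neighborFinset i, Scount G (m+1) i j l)
      + (∑ l ∈ G.neighborFinset i, Tcount G (m+1) i j l)
      = G.degree i * Ncount G (m+1) i j := by
    rw [← Finset.sum_add_distrib]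
    rw [Finset.sum_congr rfl (fun l _ => by rw [Nat.add_comm, lemST])]
    rw [Finset.sum_const, smul_eq_mul, SimpleGraph.card_neighborFinset_eq_degree]
  have A5 : (∑ l ∈ G.neighborFinset i, Tcount G (m+1) i j l)
      = Ncount G (m+1) i j := by
    rw [Finset.sum_congr rfl (fun l hl => by
      rw [lemT, if_pos ((SimpleGraph.mem_neighborFinset G i l).mp hl)])]
    exact (lemA m i j).symm
  generalize hP : G.degree i * Ncount G (m+1) i j = P at A4 ⊢
  omega

lemma Ncount_of_le_one (k : ℕ) (hk : k ≤ 1) (i j : Fin n) :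
    Ncount G k i j = (G.finsetWalkLength k i j).card := by
  rw [Ncount, Finset.filter_true_of_mem]
  intro w hw
  exact btCount_eq_zero_of_length_le_one w
    (le_trans (le_of_eq (SimpleGraph.mem_finsetWalkLength_iff.mp hw)) hk)

lemma cardWL (k : ℕ) (i j : Fin n) :
    ((G.finsetWalkLength k i j).card : ℝ) = (G.adjMatrix ℝ ^ k) i j := by
  rw [SimpleGraph.adjMatrix_pow_apply_eq_card_walk, SimpleGraph.card_set_walk_length_eq]

lemma N0 (i j : Fin n) : (Ncount G 0 i j : ℝ) = (1 : Matrix (Fin n) (Fin n) ℝ) i j := by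
  rw [Ncount_of_le_one 0 (by norm_num), cardWL, pow_zero]

lemma N1 (i j : Fin n) : (Ncount G 1 i j : ℝ) = G.adjMatrix ℝ i j := by
  rw [Ncount_of_le_one 1 le_rfl, cardWL, pow_one]

lemma btCount_len_two {i j : Fin n} (w : G.Walk i j) (hw : w.length = 2) :
    btCount w = if i = j then 1 else 0 := by
  have h0 : w.getVert 0 = i := w.getVert_zero
  have h2 : w.getVert 2 = j := by rw [← hw]; exact w.getVert_length
  rw [btCount, hw]
  rw [show (2:ℕ) - 1 = 1 from rfl, Finset.range_one]
  by_cases hij : i = j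
  · rw [if_pos hij, Finset.filter_true_of_mem (by simp [h0, h2, hij]), Finset.card_singleton]
  · rw [if_neg hij, Finset.card_eq_zero, Finset.filter_eq_empty_iff]
    intro x hx
    simp only [Finset.mem_singleton] at hx
    subst hx
    rw [h0, h2]
    exact hij

lemma N2 (i j : Fin n) : (Ncount G 2 i j : ℝ)
    = (G.adjMatrix ℝ ^ 2) i j - (if i = j then (G.degree i : ℝ) else 0) := by
  by_cases hij : i = j
  · subst hij
    have hzero : Ncount G 2 i i = 0 := by
      rw [Ncount, Finset.card_eq_zero, Finset.filter_eq_empty_iff]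
      intro w hw
      rw [btCount_len_two w (SimpleGraph.mem_finsetWalkLength_iff.mp hw), if_pos rfl]
      norm_num
    rw [hzero, if_pos rfl, pow_two, SimpleGraph.adjMatrix_mul_self_apply_self]
    simp
  · rw [if_neg hij, sub_zero, Ncount, Finset.filter_true_of_mem, cardWL]
    intro w hw
    rw [btCount_len_two w (SimpleGraph.mem_finsetWalkLength_iff.mp hw), if_neg hij]


end Aux

/-- The number of nonbacktracking walks of length `k` from `i` to `j` in `G`. -/
def nbtWalkCount {n : ℕ} (G : SimpleGraph (Fin n)) [DecidableRel G.Adj]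
    (k : ℕ) (i j : Fin n) : ℕ :=
  ((G.finsetWalkLength k i j).filter (fun w => btCount w = 0)).card

/-- Let `A = G.adjMatrix ℝ`, `D = diag(A𝟙)`, `μ ∈ [0,1]`, and let `q`
satisfy the backtrack-downweighted recurrence `q 0 = I`, `q 1 = A`, `q 2 = A² − μD`,
`q (k+1) = A·q k + μ(μI − D)·q (k−1)` for `k ≥ 2`. Then for `μ = 1` the matrices `q k`
coincide with the nonbacktracking walk count matrices: `(q k) i j` equals the number of
nonbacktracking walks of length `k` from `i` to `j`, for all `k`, `i`, `j`. -/
theorem btdw_mu_one_eq_nbt_count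
    {n : ℕ} (G : SimpleGraph (Fin n)) [DecidableRel G.Adj]
    (A D : Matrix (Fin n) (Fin n) ℝ)
    (hA : A = G.adjMatrix ℝ)
    (hD : D = Matrix.diagonal (A *ᵥ fun _ => (1 : ℝ)))
    (μ : ℝ) (hμ : μ = 1)
    (q : ℕ → Matrix (Fin n) (Fin n) ℝ)
    (hq0 : q 0 = 1) (hq1 : q 1 = A) (hq2 : q 2 = A ^ 2 - μ • D)
    (hqrec : ∀ k, 2 ≤ k →
      q (k + 1) = A * q k + (μ • (μ • (1 : Matrix (Fin n) (Fin n) ℝ) - D)) * q (k - 1)) :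
    ∀ k i j, q k i j = (nbtWalkCount G k i j : ℝ) := by
  subst hμ hA
  have hDdeg : D = Matrix.diagonal (fun v => (G.degree v : ℝ)) := by
    have hv : (G.adjMatrix ℝ *ᵥ fun _ => (1:ℝ)) = fun v => (G.degree v : ℝ) := by
      funext v
      simpa using SimpleGraph.adjMatrix_mulVec_const_apply (G := G) (α := ℝ) (a := 1) (v := v)
    rw [hD, hv]
  have hQ : ∀ k i j, q k i j = (Ncount G k i j : ℝ) := by
    intro k
    induction k using Nat.strong_induction_on with
    | _ k ih =>
      match k with
      | 0 => intro i j; rw [hq0, N0]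
      | 1 => intro i j; rw [hq1, N1]
      | 2 =>
        intro i j
        rw [hq2, N2, one_smul, Matrix.sub_apply, hDdeg, Matrix.diagonal_apply]
      | (m+3) =>
        intro i j
        have hrec := hqrec (m+2) (by omega)
        have h1 : m + 2 + 1 = m + 3 := rfl
        have h2 : m + 2 - 1 = m + 1 := rfl
        rw [h1, h2] at hrec
        rw [hrec]
        simp only [one_smul, Matrix.add_apply]
        rw [SimpleGraph.adjMatrix_mul_apply, Matrix.sub_mul, one_mul, Matrix.sub_apply,
          hDdeg, Matrix.diagonal_mul]
        have hkey := keyRec (G := G) m i j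
        have hsum : ∀ l ∈ G.neighborFinset i, q (m+2) l j = (Ncount G (m+2) l j : ℝ) :=
          fun l _ => ih (m+2) (by omega) l j
        rw [Finset.sum_congr rfl hsum, ih (m+1) (by omega) i j]
        have hcast : (Ncount G (m+3) i j : ℝ) + (G.degree i : ℝ) * (Ncount G (m+1) i j : ℝ)
            = (∑ l ∈ G.neighborFinset i, (Ncount G (m+2) l j : ℝ)) + (Ncount G (m+1) i j : ℝ) := by
          exact_mod_cast congrArg (Nat.cast : ℕ → ℝ) hkey
        linarith [hcast]
  intro k i j
  rw [hQ k i j]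
  rfl
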